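/- Let Ω ⊆ ℝ^d be open and connected, let L^{α,β} u := −Tr(A^{α,β}(x)D²u) − b^{α,β}(x)·Du + c^{α,β}(x)u with A^{α,β}(x) positive semidefinite and c^{α,β}(x) ≥ 0, and assume the Isaacs operators sup_β inf_α L^{α,β} and inf_α sup_β L^{α,β} are finite and continuous. Let Z₁,…,Z_m : closure(Ω) → ℝ^d be locally Lipschitz vector fields whose control system (S) satisfies the bounded time controllability property (BTC). Then: (i) if there exists β̄ such that A^{α,β̄}(x) ≥ Z_i(x) ⊗ Z_i(x) for all α, i and x, then any viscosity subsolution of sup_β inf_α L^{α,β} u = 0 attaining a nonnegative maximum in Ω is constant; (ii) if for every α there exists β(α) such that A^{α,β(α)}(x) ≥ Z_i(x) ⊗ Z_i(x) for all i and x, then any viscosity subsolution of inf_α sup_β L^{α,β} u = 0 attaining a nonnegative maximum in Ω is constant. -/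

import Mathlib

open Set Metric Filter Topology

noncomputable section

/-- Euclidean space `ℝ^d`. -/
abbrev EV (d : ℕ) := EuclideanSpace ℝ (Fin d)

/-- The outer product `p ⊗ p` as a `d × d` matrix. -/
def outer {d : ℕ} (p : EV d) : Matrix (Fin d) (Fin d) ℝ := Matrix.of fun i j => p i * p j

/-- Euclidean dot product. -/
def dotp {d : ℕ} (p q : EV d) : ℝ := ∑ i, p i * q i

/-- Euclidean gradient. -/
def grad {d : ℕ} (φ : EV d → ℝ) (x : EV d) : EV d :=
  (EuclideanSpace.equiv (Fin d) ℝ).symm fun i => fderiv ℝ φ x (EuclideanSpace.single i 1)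

/-- Euclidean Hessian matrix. -/
def hess {d : ℕ} (φ : EV d → ℝ) (x : EV d) : Matrix (Fin d) (Fin d) ℝ :=
  Matrix.of fun i j =>
    fderiv ℝ (fun y => fderiv ℝ φ y (EuclideanSpace.single j 1)) x (EuclideanSpace.single i 1)

/-- `F` is proper: nondecreasing in `r`, nonincreasing in the matrix argument
(w.r.t. the positive semidefinite order `Y ≤ X ↔ (X - Y).PosSemidef`). -/
def IsProper {d m : ℕ} (Ω : Set (EV d))
    (F : EV d → ℝ → EV m → Matrix (Fin m) (Fin m) ℝ → ℝ) : Prop :=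
  ∀ x ∈ Ω, ∀ r s : ℝ, ∀ p : EV m, ∀ X Y : Matrix (Fin m) (Fin m) ℝ,
    r ≤ s → (X - Y).PosSemidef → F x r p X ≤ F x s p Y

/-- Lower semicontinuity of the operator `F`, jointly in all its arguments. -/
def IsLscOperator {d m : ℕ} (Ω : Set (EV d))
    (F : EV d → ℝ → EV m → Matrix (Fin m) (Fin m) ℝ → ℝ) : Prop :=
  LowerSemicontinuousOn
    (fun q : EV d × ℝ × EV m × Matrix (Fin m) (Fin m) ℝ => F q.1 q.2.1 q.2.2.1 q.2.2.2)
    {q | q.1 ∈ Ω ∧ q.2.2.1 ≠ 0 ∧ q.2.2.2.IsSymm}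

/-- Condition (ii) (scaling): for some `φ : (0,1] → (0,∞)`,
`F(x, ξs, ξp, ξX) ≥ φ(ξ) F(x,s,p,X)` for all `ξ ∈ (0,1]`, `s ∈ [-1,0]`. -/
def HasScaling {d m : ℕ} (Ω : Set (EV d))
    (F : EV d → ℝ → EV m → Matrix (Fin m) (Fin m) ℝ → ℝ) : Prop :=
  ∃ φ : ℝ → ℝ, (∀ ξ ∈ Ioc (0:ℝ) 1, 0 < φ ξ) ∧
    ∀ ξ ∈ Ioc (0:ℝ) 1, ∀ s ∈ Icc (-1:ℝ) 0, ∀ x ∈ Ω, ∀ p : EV m, p ≠ 0 →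
      ∀ X : Matrix (Fin m) (Fin m) ℝ, X.IsSymm →
        φ ξ * F x s p X ≤ F x (ξ * s) (ξ • p) (ξ • X)

/-- Ellipticity condition (elli) for a subelliptic operator `G`. -/
def IsElliptic {d m : ℕ} (Ω : Set (EV d))
    (G : EV d → ℝ → EV m → Matrix (Fin m) (Fin m) ℝ → ℝ) : Prop :=
  ∀ x ∈ Ω, ∀ q : EV m, q ≠ 0 → ∀ X : Matrix (Fin m) (Fin m) ℝ, X.IsSymm →
    ∃ γ : ℝ, 0 < γ ∧ 0 < G x 0 q (X - γ • outer q)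

/-- `Z` is a generalized subunit vector for `F` at `x`:
`sup_{γ>0} F(x,0,p, I - γ p⊗p) > 0` whenever `Z·p ≠ 0`. -/
def IsSubunitAt {d : ℕ} (F : EV d → ℝ → EV d → Matrix (Fin d) (Fin d) ℝ → ℝ)
    (x : EV d) (Z : EV d) : Prop :=
  ∀ p : EV d, dotp Z p ≠ 0 → ∃ γ : ℝ, 0 < γ ∧ 0 < F x 0 p (1 - γ • outer p)

/-- Viscosity subsolution (test functions with nonvanishing gradient). -/
def IsViscSubsol {d : ℕ} (Ω : Set (EV d))
    (F : EV d → ℝ → EV d → Matrix (Fin d) (Fin d) ℝ → ℝ) (u : EV d → ℝ) : Prop :=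
  ∀ φ : EV d → ℝ, ContDiff ℝ 2 φ → ∀ x ∈ Ω,
    IsLocalMaxOn (fun y => u y - φ y) Ω x → grad φ x ≠ 0 →
      F x (u x) (grad φ x) (hess φ x) ≤ 0

/-- Viscosity supersolution (test functions with nonvanishing gradient). -/
def IsViscSupersol {d : ℕ} (Ω : Set (EV d))
    (F : EV d → ℝ → EV d → Matrix (Fin d) (Fin d) ℝ → ℝ) (v : EV d → ℝ) : Prop :=
  ∀ φ : EV d → ℝ, ContDiff ℝ 2 φ → ∀ x ∈ Ω,
    IsLocalMinOn (fun y => v y - φ y) Ω x → grad φ x ≠ 0 →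
      0 ≤ F x (v x) (grad φ x) (hess φ x)

/-- Viscosity subsolution (all `C²` test functions). -/
def IsViscSubsolAll {d : ℕ} (Ω : Set (EV d))
    (F : EV d → ℝ → EV d → Matrix (Fin d) (Fin d) ℝ → ℝ) (u : EV d → ℝ) : Prop :=
  ∀ φ : EV d → ℝ, ContDiff ℝ 2 φ → ∀ x ∈ Ω,
    IsLocalMaxOn (fun y => u y - φ y) Ω x →
      F x (u x) (grad φ x) (hess φ x) ≤ 0

/-- Viscosity supersolution (all `C²` test functions). -/
def IsViscSupersolAll {d : ℕ} (Ω : Set (EV d))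
    (F : EV d → ℝ → EV d → Matrix (Fin d) (Fin d) ℝ → ℝ) (v : EV d → ℝ) : Prop :=
  ∀ φ : EV d → ℝ, ContDiff ℝ 2 φ → ∀ x ∈ Ω,
    IsLocalMinOn (fun y => v y - φ y) Ω x →
      0 ≤ F x (v x) (grad φ x) (hess φ x)

/-- Locally Lipschitz on a set. -/
def LocLipschitzOn {α β : Type*} [PseudoMetricSpace α] [PseudoMetricSpace β]
    (f : α → β) (s : Set α) : Prop :=
  ∀ x ∈ s, ∃ K : NNReal, ∃ ε : ℝ, 0 < ε ∧ LipschitzOnWith K f (s ∩ Metric.ball x ε)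

/-- Admissible controls: measurable, with `∑ i βᵢ(t)² ≤ 1`. -/
def Admissible {m : ℕ} (β : ℝ → Fin m → ℝ) : Prop :=
  (∀ i, Measurable fun t => β t i) ∧ ∀ t : ℝ, ∑ i, (β t i) ^ 2 ≤ 1

/-- (Carathéodory) trajectory of the control system `y' = ∑ᵢ βᵢ Zᵢ(y)` on `[0, T]`. -/
def IsTrajOn {d m : ℕ} (Z : Fin m → EV d → EV d) (β : ℝ → Fin m → ℝ)
    (y : ℝ → EV d) (T : ℝ) : Prop :=
  ContinuousOn y (Icc 0 T) ∧
    ∀ t ∈ Icc 0 T, y t = y 0 + ∫ s in (0:ℝ)..t, ∑ i, β s i • Z i (y s)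

/-- `x₁` is reachable from `x₀` by the control system, with trajectory staying in `Ω`. -/
def ReachableIn {d m : ℕ} (Ω : Set (EV d)) (Z : Fin m → EV d → EV d)
    (x₀ x₁ : EV d) : Prop :=
  ∃ (β : ℝ → Fin m → ℝ) (y : ℝ → EV d) (T : ℝ), 0 ≤ T ∧ Admissible β ∧
    IsTrajOn Z β y T ∧ (∀ t ∈ Icc 0 T, y t ∈ Ω) ∧ y 0 = x₀ ∧ y T = x₁

/-- Bounded time controllability in `Ω`. -/
def BTC {d m : ℕ} (Ω : Set (EV d)) (Z : Fin m → EV d → EV d) : Prop :=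
  ∀ x₀ ∈ Ω, ∀ x₁ ∈ Ω, ReachableIn Ω Z x₀ x₁

/-- Generalized exterior (Bony, proximal) normal `ν` to `K` at `z`. -/
def IsExtNormal {d : ℕ} (K : Set (EV d)) (z ν : EV d) : Prop :=
  z ∈ frontier K ∧ ‖ν‖ = 1 ∧
    ∃ t : ℝ, 0 < t ∧ Metric.closedBall (z + t • ν) t ∩ closure K = {z}

/-- Lie bracket of two vector fields. -/
def vfBracket {d : ℕ} (X Y : EV d → EV d) : EV d → EV d :=
  fun x => fderiv ℝ Y x (X x) - fderiv ℝ X x (Y x)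

/-- Vector fields obtained from `Z₁,…,Z_m` by iterated Lie brackets. -/
inductive LieGenerated {d m : ℕ} (Z : Fin m → EV d → EV d) : (EV d → EV d) → Prop
  | base (i : Fin m) : LieGenerated Z (Z i)
  | bracket {X Y : EV d → EV d} :
      LieGenerated Z X → LieGenerated Z Y → LieGenerated Z (vfBracket X Y)

/-- Hörmander condition: the fields and their iterated brackets span `ℝ^d` at every point of `Ω`. -/
def Hormander {d m : ℕ} (Ω : Set (EV d)) (Z : Fin m → EV d → EV d) : Prop :=
  ∀ x ∈ Ω, Submodule.span ℝ {v : EV d | ∃ W, LieGenerated Z W ∧ W x = v} = ⊤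

/-- Intrinsic (horizontal) gradient `σ(x)ᵀ p`. -/
def sigmaT {d m : ℕ} (σ : Fin m → EV d → EV d) (x : EV d) (p : EV d) : EV m :=
  (EuclideanSpace.equiv (Fin m) ℝ).symm fun j => ∑ i, σ j x i * p i

/-- `σ(x)ᵀ X σ(x)` as an `m × m` matrix. -/
def sigmaHess {d m : ℕ} (σ : Fin m → EV d → EV d) (x : EV d)
    (X : Matrix (Fin d) (Fin d) ℝ) : Matrix (Fin m) (Fin m) ℝ :=
  Matrix.of fun j k => ∑ i, ∑ l, σ j x i * X i l * σ k x l

/-- First-order correction term `g(x,p)` of the symmetrized intrinsic Hessian. -/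
def corrTerm {d m : ℕ} (σ : Fin m → EV d → EV d) (x : EV d) (p : EV d) :
    Matrix (Fin m) (Fin m) ℝ :=
  Matrix.of fun j k =>
    ((∑ i, (fderiv ℝ (σ k) x (σ j x)) i * p i) +
      (∑ i, (fderiv ℝ (σ j) x (σ k x)) i * p i)) / 2

/-- Euclidean form `F(x,r,p,X) = G(x, r, σᵀp, σᵀXσ + g(x,p))` of a subelliptic operator. -/
def euclOp {d m : ℕ} (σ : Fin m → EV d → EV d)
    (G : EV d → ℝ → EV m → Matrix (Fin m) (Fin m) ℝ → ℝ) :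
    EV d → ℝ → EV d → Matrix (Fin d) (Fin d) ℝ → ℝ :=
  fun x r p X => G x r (sigmaT σ x p) (sigmaHess σ x X + corrTerm σ x p)

/-- `A ≥ Z ⊗ Z` in the quadratic-form sense: `ξᵀAξ ≥ (Z·ξ)²` for all `ξ`. -/
def matGEouter {d : ℕ} (A : Matrix (Fin d) (Fin d) ℝ) (Z : EV d) : Prop :=
  ∀ ξ : EV d, (dotp Z ξ) ^ 2 ≤ ∑ i, ∑ j, A i j * ξ i * ξ j

/-- The two-parameter linear operator `L^{α,β}` evaluated at `(x,r,p,X)`. -/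
def linOp2 {d : ℕ} {I J : Type*} (A : I → J → EV d → Matrix (Fin d) (Fin d) ℝ)
    (b : I → J → EV d → EV d) (c : I → J → EV d → ℝ) (α : I) (β : J)
    (x : EV d) (r : ℝ) (p : EV d) (X : Matrix (Fin d) (Fin d) ℝ) : ℝ :=
  -((A α β x) * X).trace - dotp (b α β x) p + c α β x * r

/-- The lower Hamilton–Jacobi–Isaacs operator `F₋ = sup_β inf_α L^{α,β}`. -/
def isaacsLower {d : ℕ} {I J : Type*} (A : I → J → EV d → Matrix (Fin d) (Fin d) ℝ)
    (b : I → J → EV d → EV d) (c : I → J → EV d → ℝ) :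
    EV d → ℝ → EV d → Matrix (Fin d) (Fin d) ℝ → ℝ :=
  fun x r p X => ⨆ β, ⨅ α, linOp2 A b c α β x r p X

/-- The upper Hamilton–Jacobi–Isaacs operator `F₊ = inf_α sup_β L^{α,β}`. -/
def isaacsUpper {d : ℕ} {I J : Type*} (A : I → J → EV d → Matrix (Fin d) (Fin d) ℝ)
    (b : I → J → EV d → EV d) (c : I → J → EV d → ℝ) :
    EV d → ℝ → EV d → Matrix (Fin d) (Fin d) ℝ → ℝ :=
  fun x r p X => ⨅ α, ⨆ β, linOp2 A b c α β x r p X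
/-! ### Auxiliary lemmas for the strong maximum principle -/

section Aux

variable {d m : ℕ}

lemma real_inner_eq_dotp (p q : EV d) : (inner ℝ p q : ℝ) = dotp p q := by
  simp [dotp, PiLp.inner_apply, RCLike.inner_apply, conj_trivial]
  exact Finset.sum_congr rfl (fun _ _ => mul_comm _ _)

/-- Maximum of an upper semicontinuous function on a compact set. -/
lemma usc_exists_max {s K : Set (EV d)} {u : EV d → ℝ} (hu : UpperSemicontinuousOn u s)
    (hK : IsCompact K) (hKs : K ⊆ s) (hne : K.Nonempty) :
    ∃ x ∈ K, ∀ y ∈ K, u y ≤ u x := by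
  by_contra hcon
  push_neg at hcon
  choose Y hY hYlt using hcon
  -- cover `K` by neighborhoods on which `u < u (Y x)`
  have hU : ∀ x (hx : x ∈ K), {w | w ∈ s → u w < u (Y x hx)} ∈ 𝓝 x := by
    intro x hx
    have h1 := hu x (hKs hx) (u (Y x hx)) (hYlt x hx)
    rw [eventually_nhdsWithin_iff] at h1
    exact h1
  obtain ⟨t, ht⟩ := hK.elim_nhds_subcover' (fun x hx => {w | w ∈ s → u w < u (Y x hx)}) hU
  -- `t` is nonempty
  obtain ⟨x0, hx0⟩ := hne
  have htne : t.Nonempty := by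
    rcases Set.mem_iUnion₂.1 (ht hx0) with ⟨i, hi, _⟩
    exact ⟨i, hi⟩
  -- pick the element of `t` with maximal value `u (Y ...)`
  obtain ⟨j, hjt, hjmax⟩ := t.exists_max_image (fun i => u (Y i.1 i.2)) htne
  have hYj : Y j.1 j.2 ∈ K := hY j.1 j.2
  rcases Set.mem_iUnion₂.1 (ht hYj) with ⟨i, hit, hiY⟩
  have : u (Y j.1 j.2) < u (Y i.1 i.2) := hiY (hKs hYj)
  exact absurd (hjmax i hit) (not_le.2 this)

/-- First derivative of the exponential barrier. -/
lemma phi_hasFDerivAt (v x : EV d) (ε k : ℝ) :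
    HasFDerivAt (fun y : EV d => -ε * Real.exp (-k * ‖y - v‖ ^ 2))
      ((2 * ε * k * Real.exp (-k * ‖x - v‖ ^ 2)) • innerSL ℝ (x - v)) x := by
  have h0 : HasFDerivAt (fun y : EV d => y - v) (ContinuousLinearMap.id ℝ (EV d)) x :=
    (hasFDerivAt_id x).sub_const v
  have h1 : HasFDerivAt (fun y : EV d => ‖y - v‖ ^ 2)
      ((2 : ℕ) • (innerSL ℝ (x - v)).comp (ContinuousLinearMap.id ℝ (EV d))) x := h0.norm_sq
  have h2 : HasFDerivAt (fun y : EV d => -k * ‖y - v‖ ^ 2)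
      ((-k) • ((2 : ℕ) • (innerSL ℝ (x - v)).comp (ContinuousLinearMap.id ℝ (EV d)))) x :=
    HasFDerivAt.const_mul h1 (-k)
  have h3 := h2.exp
  have h4 := HasFDerivAt.const_mul h3 (-ε)
  refine h4.congr_fderiv ?_
  ext w
  simp [ContinuousLinearMap.smul_apply, innerSL_apply_apply, smul_smul, two_smul]
  ring

lemma phi_contDiff (v : EV d) (ε k : ℝ) :
    ContDiff ℝ 2 (fun y : EV d => -ε * Real.exp (-k * ‖y - v‖ ^ 2)) := by
  have hq : ContDiff ℝ 2 (fun y : EV d => ‖y - v‖ ^ 2) := (contDiff_id.sub contDiff_const).norm_sq ℝ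
  exact contDiff_const.mul (contDiff_const.mul hq).exp

lemma phi_grad (v x : EV d) (ε k : ℝ) :
    grad (fun y : EV d => -ε * Real.exp (-k * ‖y - v‖ ^ 2)) x
      = (2 * ε * k * Real.exp (-k * ‖x - v‖ ^ 2)) • (x - v) := by
  have h := (phi_hasFDerivAt v x ε k).fderiv
  apply PiLp.ext
  intro i
  show fderiv ℝ (fun y : EV d => -ε * Real.exp (-k * ‖y - v‖ ^ 2)) x (EuclideanSpace.single i 1)
      = _
  rw [h]
  simp [ContinuousLinearMap.smul_apply, innerSL_apply_apply, EuclideanSpace.inner_single_right,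
    PiLp.smul_apply, PiLp.sub_apply]

lemma phi_hess (v x : EV d) (ε k : ℝ) :
    hess (fun y : EV d => -ε * Real.exp (-k * ‖y - v‖ ^ 2)) x
      = (2 * ε * k * Real.exp (-k * ‖x - v‖ ^ 2)) •
          ((1 : Matrix (Fin d) (Fin d) ℝ) - (2 * k) • outer (x - v)) := by
  ext i j
  show fderiv ℝ (fun y => fderiv ℝ (fun y : EV d => -ε * Real.exp (-k * ‖y - v‖ ^ 2)) y
      (EuclideanSpace.single j 1)) x (EuclideanSpace.single i 1) = _
  have hG : (fun y => fderiv ℝ (fun y : EV d => -ε * Real.exp (-k * ‖y - v‖ ^ 2)) y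
      (EuclideanSpace.single j 1))
      = fun y : EV d => (2 * ε * k * Real.exp (-k * ‖y - v‖ ^ 2)) * (y j - v j) := by
    funext y
    rw [(phi_hasFDerivAt v y ε k).fderiv]
    simp [ContinuousLinearMap.smul_apply, innerSL_apply_apply, EuclideanSpace.inner_single_right,
      PiLp.sub_apply]
  rw [hG]
  have h0 : HasFDerivAt (fun y : EV d => y - v) (ContinuousLinearMap.id ℝ (EV d)) x :=
    (hasFDerivAt_id x).sub_const v
  have h1 : HasFDerivAt (fun y : EV d => ‖y - v‖ ^ 2)
      ((2 : ℕ) • (innerSL ℝ (x - v)).comp (ContinuousLinearMap.id ℝ (EV d))) x := h0.norm_sq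
  have h2 := HasFDerivAt.const_mul h1 (-k)
  have h3 := h2.exp
  have h4 := HasFDerivAt.const_mul h3 (2 * ε * k)
  have h5 : HasFDerivAt (fun w : EV d => w j - v j) (EuclideanSpace.proj (𝕜 := ℝ) j) x := by
    exact ((EuclideanSpace.proj (𝕜 := ℝ) j).hasFDerivAt (x := x)).sub_const (v j)
  have h6 := h4.mul h5
  have key : fderiv ℝ (fun y : EV d => (2 * ε * k * Real.exp (-k * ‖y - v‖ ^ 2)) * (y j - v j)) x
      = ((2 * ε * k * Real.exp (-k * ‖x - v‖ ^ 2)) •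
          (EuclideanSpace.proj (𝕜 := ℝ) j : EV d →L[ℝ] ℝ)
        + (x j - v j) • ((2 * ε * k) • (Real.exp (-k * ‖x - v‖ ^ 2) •
            ((-k) • ((2 : ℕ) • (innerSL ℝ (x - v)).comp (ContinuousLinearMap.id ℝ (EV d))))))) :=
    h6.fderiv
  rw [key]
  simp only [ContinuousLinearMap.add_apply, ContinuousLinearMap.smul_apply,
    ContinuousLinearMap.coe_comp', Function.comp_apply, ContinuousLinearMap.coe_id', id_eq,
    innerSL_apply_apply, EuclideanSpace.inner_single_right, PiLp.proj_apply,
    EuclideanSpace.single_apply, Matrix.smul_apply, Matrix.sub_apply, Matrix.one_apply,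
    Matrix.of_apply, outer, smul_eq_mul, nsmul_eq_mul, PiLp.sub_apply, Nat.cast_ofNat,
    RCLike.inner_apply, conj_trivial]
  by_cases hij : i = j
  · subst hij; simp; try ring
  · have hji : ¬ j = i := fun h => hij h.symm
    simp [hij, hji]; try ring

lemma locLip_continuousOn {f : EV d → EV d} {S : Set (EV d)} (hf : LocLipschitzOn f S) :
    ContinuousOn f S := by
  intro x hx
  obtain ⟨K, ε, hε, hlip⟩ := hf x hx
  have h1 : ContinuousWithinAt f (S ∩ Metric.ball x ε) x :=
    hlip.continuousOn x ⟨hx, Metric.mem_ball_self hε⟩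
  exact (continuousWithinAt_inter (Metric.ball_mem_nhds x hε)).1 h1


/-- A uniform Lipschitz bound on a compact subset for a locally Lipschitz map. -/
lemma locLip_uniform {f : EV d → EV d} {S : Set (EV d)} (hf : LocLipschitzOn f S)
    {K : Set (EV d)} (hK : IsCompact K) (hKS : K ⊆ S) :
    ∃ L : ℝ, 0 ≤ L ∧ ∀ x ∈ K, ∀ y ∈ K, ‖f x - f y‖ ≤ L * ‖x - y‖ := by
  rcases K.eq_empty_or_nonempty with hKe | hKne
  · exact ⟨0, le_refl 0, by simp [hKe]⟩
  -- a bound for `f` on `K`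
  obtain ⟨C, hC⟩ := hK.exists_bound_of_continuousOn ((locLip_continuousOn hf).mono hKS)
  have hC0 : 0 ≤ C := le_trans (norm_nonneg _) (hC _ hKne.choose_spec)
  -- choose local Lipschitz data
  choose Kc εc hεc hlipc using fun (x : EV d) (hx : x ∈ S) => hf x hx
  have hU : ∀ x (hx : x ∈ K), Metric.ball x (εc x (hKS hx) / 2) ∈ 𝓝 x := fun x hx =>
    Metric.ball_mem_nhds x (by linarith [hεc x (hKS hx)])
  obtain ⟨t, ht⟩ := hK.elim_nhds_subcover' (fun x hx => Metric.ball x (εc x (hKS hx) / 2)) hU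
  have htne : t.Nonempty := by
    obtain ⟨x0, hx0⟩ := hKne
    rcases Set.mem_iUnion₂.1 (ht hx0) with ⟨i, hi, _⟩
    exact ⟨i, hi⟩
  -- minimal radius and maximal constant
  obtain ⟨jm, hjm, hjmin⟩ := t.exists_min_image (fun i => εc i.1 (hKS i.2) / 2) htne
  set η : ℝ := εc jm.1 (hKS jm.2) / 2 with hη
  have hηpos : 0 < η := by have := hεc jm.1 (hKS jm.2); rw [hη]; linarith
  obtain ⟨jM, hjM, hjmax⟩ := t.exists_max_image (fun i => ((Kc i.1 (hKS i.2) : ℝ))) htne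
  set L0 : ℝ := (Kc jM.1 (hKS jM.2) : ℝ) with hL0
  have hL00 : 0 ≤ L0 := (Kc jM.1 (hKS jM.2)).2
  refine ⟨max L0 (2 * C / η), le_trans hL00 (le_max_left _ _), ?_⟩
  intro x hx y hy
  by_cases hd : dist x y < η
  · -- close points: use a common local Lipschitz ball
    rcases Set.mem_iUnion₂.1 (ht hx) with ⟨i, hit, hxi⟩
    have hxball : x ∈ Metric.ball i.1 (εc i.1 (hKS i.2)) := by
      have := Metric.mem_ball.1 hxi
      exact Metric.mem_ball.2 (by linarith [hεc i.1 (hKS i.2)])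
    have hyball : y ∈ Metric.ball i.1 (εc i.1 (hKS i.2)) := by
      have h1 := Metric.mem_ball.1 hxi
      have h2 : dist y i.1 ≤ dist y x + dist x i.1 := dist_triangle y x i.1
      have h3 : dist y x < η := by rw [dist_comm]; exact hd
      have h4 : η ≤ εc i.1 (hKS i.2) / 2 := hjmin i hit
      exact Metric.mem_ball.2 (by linarith)
    have hlip := hlipc i.1 (hKS i.2)
    have hle : (Kc i.1 (hKS i.2) : ℝ) ≤ L0 := hjmax i hit
    have := hlip.dist_le_mul x ⟨hKS hx, hxball⟩ y ⟨hKS hy, hyball⟩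
    rw [dist_eq_norm, dist_eq_norm] at this
    calc ‖f x - f y‖ ≤ (Kc i.1 (hKS i.2) : ℝ) * ‖x - y‖ := this
      _ ≤ max L0 (2 * C / η) * ‖x - y‖ := by
          apply mul_le_mul_of_nonneg_right (le_trans hle (le_max_left _ _)) (norm_nonneg _)
  · -- far points: use the global bound
    push_neg at hd
    have h1 : ‖f x - f y‖ ≤ 2 * C := by
      calc ‖f x - f y‖ ≤ ‖f x‖ + ‖f y‖ := norm_sub_le _ _
        _ ≤ 2 * C := by linarith [hC x hx, hC y hy]
    have h2 : 2 * C ≤ (2 * C / η) * ‖x - y‖ := by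
      rw [dist_eq_norm] at hd
      rw [div_mul_eq_mul_div, le_div_iff₀ hηpos]
      have : 0 ≤ 2 * C := by linarith
      calc 2 * C * η ≤ 2 * C * ‖x - y‖ := mul_le_mul_of_nonneg_left hd this
        _ = 2 * C * ‖x - y‖ := rfl
    calc ‖f x - f y‖ ≤ (2 * C / η) * ‖x - y‖ := le_trans h1 h2
      _ ≤ max L0 (2 * C / η) * ‖x - y‖ :=
          mul_le_mul_of_nonneg_right (le_max_right _ _) (norm_nonneg _)

/-- Discrete Gronwall-type iteration. -/
lemma iter_bound (g : ℕ → ℝ) (C₁ C₂ h : ℝ) (hg0 : g 0 = 0) (hC₁ : 0 ≤ C₁) (hC₂ : 0 ≤ C₂)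
    (hh : 0 ≤ h) (n : ℕ) (hstep : ∀ j < n, g (j + 1) ≤ g j * (1 + C₁ * h) + C₂ * h ^ 2) :
    g n ≤ C₂ * h ^ 2 * n * (1 + C₁ * h) ^ n := by
  induction n with
  | zero => simp [hg0]
  | succ n ih =>
    have hstep' : ∀ j < n, g (j + 1) ≤ g j * (1 + C₁ * h) + C₂ * h ^ 2 := by
      intro j hj; exact hstep j (by omega)
    have h1 : (1:ℝ) ≤ 1 + C₁ * h := by nlinarith
    have h2 : g n ≤ C₂ * h ^ 2 * n * (1 + C₁ * h) ^ n := ih hstep'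
    have h3 : g (n + 1) ≤ g n * (1 + C₁ * h) + C₂ * h ^ 2 := hstep n (by omega)
    have h4 : (1 + C₁ * h) ^ n ≤ (1 + C₁ * h) ^ (n + 1) := by
      calc (1 + C₁ * h) ^ n = (1 + C₁ * h) ^ n * 1 := by ring
      _ ≤ (1 + C₁ * h) ^ n * (1 + C₁ * h) := by
          apply mul_le_mul_of_nonneg_left h1 (by positivity)
      _ = (1 + C₁ * h) ^ (n + 1) := by ring
    have h5 : (1:ℝ) ≤ (1 + C₁ * h) ^ (n + 1) := by
      have := pow_le_pow_left₀ (by norm_num : (0:ℝ) ≤ 1) h1 (n + 1)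
      simpa using this
    calc g (n + 1) ≤ g n * (1 + C₁ * h) + C₂ * h ^ 2 := h3
      _ ≤ (C₂ * h ^ 2 * n * (1 + C₁ * h) ^ n) * (1 + C₁ * h) + C₂ * h ^ 2 := by
            apply add_le_add_left
            apply mul_le_mul_of_nonneg_right h2 (by nlinarith)
        _ = C₂ * h ^ 2 * n * (1 + C₁ * h) ^ (n + 1) + C₂ * h ^ 2 * 1 := by ring
        _ ≤ C₂ * h ^ 2 * n * (1 + C₁ * h) ^ (n + 1) + C₂ * h ^ 2 * (1 + C₁ * h) ^ (n + 1) := by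
            apply add_le_add_right
            apply mul_le_mul_of_nonneg_left h5 (by positivity)
        _ = C₂ * h ^ 2 * ↑(n + 1) * (1 + C₁ * h) ^ (n + 1) := by push_cast; ring

set_option maxHeartbeats 1000000 in
/-- The viscosity tangency lemma: generalized subunit vectors are tangent (in the proximal
sense) to the set of maximum points of a viscosity subsolution. -/
lemma tangency {Ω : Set (EV d)} (hΩ : IsOpen Ω)
    {F : EV d → ℝ → EV d → Matrix (Fin d) (Fin d) ℝ → ℝ}
    (HC1 : ContinuousOn (fun q : EV d × ℝ × EV d × Matrix (Fin d) (Fin d) ℝ =>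
        F q.1 q.2.1 q.2.2.1 q.2.2.2) {q | q.1 ∈ closure Ω})
    (HC2 : ∀ x ∈ Ω, ∀ r s : ℝ, ∀ p X, r ≤ s → F x r p X ≤ F x s p X)
    (HC3 : ∀ x ∈ Ω, ∀ τ : ℝ, 0 < τ → ∀ r p X, τ * F x r p X ≤ F x (τ * r) (τ • p) (τ • X))
    {Z : Fin m → EV d → EV d}
    (HC4 : ∀ x ∈ Ω, ∀ ζ : EV d, (∃ i, dotp (Z i x) ζ ≠ 0) → 0 < F x 0 0 (-outer ζ))
    {u : EV d → ℝ} (hu : UpperSemicontinuousOn u Ω) (hsub : IsViscSubsolAll Ω F u)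
    {M : ℝ} (hM : 0 ≤ M) (humax : ∀ x ∈ Ω, u x ≤ M)
    {v' z : EV d} {ρ' : ℝ} (hρ' : 0 < ρ') (hz : z ∈ Ω) (hzρ : ‖z - v'‖ = ρ')
    (hzM : u z = M)
    (htouch : ∀ x ∈ Ω, ‖x - v'‖ ≤ ρ' → u x = M → x = z) :
    ∀ i, dotp (Z i z) (z - v') = 0 := by
  intro i0
  by_contra hne0
  have hzclos : z ∈ closure Ω := subset_closure hz
  -- Step 1 : find `k > 0` with positivity of the rescaled operator at `z`
  have hstep1 : ∃ k : ℝ, 0 < k ∧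
      0 < F z (-(1 / (2 * k))) (z - v')
        ((1 : Matrix (Fin d) (Fin d) ℝ) - (2 * k) • outer (z - v')) := by
    by_contra hcon
    push_neg at hcon
    have hscal : ∀ n : ℕ, F z (-(1 / (2 * ((n:ℝ) + 1)) * (1 / (2 * ((n:ℝ) + 1)))))
        ((1 / (2 * ((n:ℝ) + 1))) • (z - v'))
        ((1 / (2 * ((n:ℝ) + 1))) • (1 : Matrix (Fin d) (Fin d) ℝ) - outer (z - v')) ≤ 0 := by
      intro n
      set k : ℝ := (n:ℝ) + 1 with hk
      have hkpos : (0:ℝ) < k := by positivity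
      have h2k : (0:ℝ) < 2 * k := by positivity
      have hF := hcon k hkpos
      have h3 := HC3 z hz (2 * k) h2k (-(1 / (2 * k) * (1 / (2 * k))))
        ((1 / (2 * k)) • (z - v'))
        ((1 / (2 * k)) • (1 : Matrix (Fin d) (Fin d) ℝ) - outer (z - v'))
      have e1 : (2 * k) * (-(1 / (2 * k) * (1 / (2 * k)))) = -(1 / (2 * k)) := by
        field_simp
      have e2 : (2 * k) • ((1 / (2 * k)) • (z - v')) = z - v' := by
        rw [smul_smul, mul_one_div, div_self (ne_of_gt h2k), one_smul]
      have e3 : (2 * k) • ((1 / (2 * k)) • (1 : Matrix (Fin d) (Fin d) ℝ) - outer (z - v'))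
          = (1 : Matrix (Fin d) (Fin d) ℝ) - (2 * k) • outer (z - v') := by
        rw [smul_sub, smul_smul, mul_one_div, div_self (ne_of_gt h2k), one_smul]
      rw [e1, e2, e3] at h3
      nlinarith [h3, hF, h2k]
    -- pass to the limit `n → ∞`
    have h0 : Filter.Tendsto (fun n : ℕ => 1 / (2 * ((n:ℝ) + 1))) Filter.atTop (𝓝 0) := by
      have h := tendsto_one_div_add_atTop_nhds_zero_nat.const_mul (1/2 : ℝ)
      have he : (fun n : ℕ => (1/2 : ℝ) * (1 / ((n:ℝ) + 1))) = fun n : ℕ => 1 / (2 * ((n:ℝ) + 1)) := by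
        funext n; field_simp
      rw [he] at h; simpa using h
    have hseq : Filter.Tendsto (fun n : ℕ =>
        ((z : EV d), (-(1 / (2 * ((n:ℝ) + 1)) * (1 / (2 * ((n:ℝ) + 1)))) : ℝ),
          ((1 / (2 * ((n:ℝ) + 1))) • (z - v') : EV d),
          ((1 / (2 * ((n:ℝ) + 1))) • (1 : Matrix (Fin d) (Fin d) ℝ) - outer (z - v'))))
        Filter.atTop (𝓝 (z, (0:ℝ), (0 : EV d), -outer (z - v'))) := by
      refine Filter.Tendsto.prodMk_nhds tendsto_const_nhds
        (Filter.Tendsto.prodMk_nhds ?_ (Filter.Tendsto.prodMk_nhds ?_ ?_))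
      · simpa using (h0.mul h0).neg
      · simpa using h0.smul_const (z - v')
      · have := (h0.smul_const (1 : Matrix (Fin d) (Fin d) ℝ)).sub_const (outer (z - v'))
        simpa using this
    have hPmem : ((z, (0:ℝ), (0 : EV d), -outer (z - v')) :
        EV d × ℝ × EV d × Matrix (Fin d) (Fin d) ℝ) ∈
        {q : EV d × ℝ × EV d × Matrix (Fin d) (Fin d) ℝ | q.1 ∈ closure Ω} := hzclos
    have hcw := (HC1 _ hPmem).tendsto
    have hcomp : Filter.Tendsto (fun n : ℕ =>
        F z (-(1 / (2 * ((n:ℝ) + 1)) * (1 / (2 * ((n:ℝ) + 1)))))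
          ((1 / (2 * ((n:ℝ) + 1))) • (z - v'))
          ((1 / (2 * ((n:ℝ) + 1))) • (1 : Matrix (Fin d) (Fin d) ℝ) - outer (z - v')))
        Filter.atTop (𝓝 (F z 0 0 (-outer (z - v')))) := by
      refine hcw.comp (tendsto_nhdsWithin_iff.2 ⟨hseq, Filter.Eventually.of_forall ?_⟩)
      intro n; exact hzclos
    have hle : F z 0 0 (-outer (z - v')) ≤ 0 :=
      le_of_tendsto hcomp (Filter.Eventually.of_forall hscal)
    exact absurd hle (not_le.2 (HC4 z hz (z - v') ⟨i0, hne0⟩))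
  obtain ⟨k, hkpos, hFz⟩ := hstep1
  -- Step 2 : the positivity persists on a small ball around `z`
  have hΦcont : ContinuousOn (fun x : EV d => F x (-(1 / (2 * k))) (x - v')
      ((1 : Matrix (Fin d) (Fin d) ℝ) - (2 * k) • outer (x - v'))) Ω := by
    have hg : ContinuousOn (fun x : EV d => ((x : EV d), (-(1 / (2 * k)) : ℝ), x - v',
        (1 : Matrix (Fin d) (Fin d) ℝ) - (2 * k) • outer (x - v'))) Ω := by
      apply ContinuousOn.prodMk continuousOn_id
      apply ContinuousOn.prodMk continuousOn_const
      apply ContinuousOn.prodMk (continuousOn_id.sub continuousOn_const)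
      apply Continuous.continuousOn
      apply Continuous.sub continuous_const
      refine (Continuous.const_smul (g := fun x : EV d => outer (x - v')) ?_ (2 * k) :)
      apply continuous_matrix
      intro i j
      show Continuous fun x : EV d => (x - v') i * (x - v') j
      exact (((EuclideanSpace.proj (𝕜 := ℝ) i).continuous.sub continuous_const).mul
        (((EuclideanSpace.proj (𝕜 := ℝ) j).continuous.sub continuous_const)))
    exact HC1.comp hg fun x hx => subset_closure hx
  have hU : {w : EV d | 0 < F w (-(1 / (2 * k))) (w - v')
      ((1 : Matrix (Fin d) (Fin d) ℝ) - (2 * k) • outer (w - v'))} ∩ Ω ∈ 𝓝 z := by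
    have h1 : ContinuousAt (fun x : EV d => F x (-(1 / (2 * k))) (x - v')
        ((1 : Matrix (Fin d) (Fin d) ℝ) - (2 * k) • outer (x - v'))) z :=
      hΦcont.continuousAt (hΩ.mem_nhds hz)
    have h2 := h1.preimage_mem_nhds (isOpen_Ioi.mem_nhds hFz)
    exact Filter.inter_mem h2 (hΩ.mem_nhds hz)
  obtain ⟨r, hrpos, hrball⟩ := Metric.mem_nhds_iff.1 hU
  set r₀ : ℝ := min (r / 2) (ρ' / 2) with hr₀def
  have hr₀pos : 0 < r₀ := lt_min (by linarith) (by linarith)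
  have hr₀ρ' : r₀ < ρ' := lt_of_le_of_lt (min_le_right _ _) (by linarith)
  have hDsub : Metric.closedBall z r₀ ⊆ {w : EV d | 0 < F w (-(1 / (2 * k))) (w - v')
      ((1 : Matrix (Fin d) (Fin d) ℝ) - (2 * k) • outer (w - v'))} ∩ Ω := by
    intro w hw
    apply hrball
    have h1 : dist w z ≤ r₀ := Metric.mem_closedBall.1 hw
    have h2 : r₀ ≤ r / 2 := min_le_left _ _
    exact Metric.mem_ball.2 (by linarith)
  have hDΩ : Metric.closedBall z r₀ ⊆ Ω := fun w hw => (hDsub hw).2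
  have hDΦ : ∀ w ∈ Metric.closedBall z r₀, 0 < F w (-(1 / (2 * k))) (w - v')
      ((1 : Matrix (Fin d) (Fin d) ℝ) - (2 * k) • outer (w - v')) := fun w hw => (hDsub hw).1
  -- Step 3 : a gap below `M` on the critical part of the sphere
  have hC'gap : ∃ ε : ℝ, 0 < ε ∧
      ∀ x ∈ Metric.sphere z r₀ ∩ Metric.closedBall v' ρ', u x + ε < M := by
    rcases (Metric.sphere z r₀ ∩ Metric.closedBall v' ρ').eq_empty_or_nonempty with hCe | hCne
    · refine ⟨1, one_pos, ?_⟩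
      intro x hx; rw [hCe] at hx; exact absurd hx (Set.notMem_empty x)
    · have hC'comp : IsCompact (Metric.sphere z r₀ ∩ Metric.closedBall v' ρ') :=
        (isCompact_sphere z r₀).inter_right Metric.isClosed_closedBall
      have hC'Ω : Metric.sphere z r₀ ∩ Metric.closedBall v' ρ' ⊆ Ω := fun x hx =>
        hDΩ (Metric.sphere_subset_closedBall hx.1)
      obtain ⟨xc, hxcC, hxcmax⟩ := usc_exists_max hu hC'comp hC'Ω hCne
      have hxcΩ : xc ∈ Ω := hC'Ω hxcC
      have hxclt : u xc < M := by
        rcases lt_or_eq_of_le (humax xc hxcΩ) with h | h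
        · exact h
        · exfalso
          have hn : ‖xc - v'‖ ≤ ρ' := by
            have := Metric.mem_closedBall.1 hxcC.2; rwa [dist_eq_norm] at this
          have hzz := htouch xc hxcΩ hn h
          have := Metric.mem_sphere.1 hxcC.1
          rw [hzz] at this; simp at this; linarith
      refine ⟨(M - u xc) / 2, by linarith, ?_⟩
      intro x hx
      have := hxcmax x hx; linarith
  obtain ⟨ε, hεpos, hεC⟩ := hC'gap
  -- Step 4 : maximize `u - φ` on the closed ball
  set φ : EV d → ℝ := fun y => -ε * Real.exp (-k * ‖y - v'‖ ^ 2) with hφdef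
  set ψ : EV d → ℝ := fun w => u w - φ w with hψdef
  have hψusc : UpperSemicontinuousOn ψ (Metric.closedBall z r₀) := by
    have h1 : UpperSemicontinuousOn u (Metric.closedBall z r₀) := hu.mono hDΩ
    have h2 : UpperSemicontinuousOn (fun w => -φ w) (Metric.closedBall z r₀) := by
      apply ContinuousOn.upperSemicontinuousOn
      exact ((phi_contDiff v' ε k).continuous.neg).continuousOn
    have h3 := h1.add h2
    have he : (fun w => u w + -φ w) = ψ := by funext w; rw [hψdef]; ring
    rwa [he] at h3
  obtain ⟨xh, hxhD, hxhmax⟩ := usc_exists_max hψusc (isCompact_closedBall z r₀)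
    (subset_refl _) ⟨z, Metric.mem_closedBall_self (le_of_lt hr₀pos)⟩
  have hxhΩ : xh ∈ Ω := hDΩ hxhD
  have hEz : (0:ℝ) < Real.exp (-k * ρ' ^ 2) := Real.exp_pos _
  have hφz : φ z = -ε * Real.exp (-k * ρ' ^ 2) := by rw [hφdef]; simp only; rw [hzρ]
  have hψz : ψ z = M + ε * Real.exp (-k * ρ' ^ 2) := by
    rw [hψdef]; simp only; rw [hφz, hzM]; ring
  have hψxh : ψ z ≤ ψ xh := hxhmax z (Metric.mem_closedBall_self (le_of_lt hr₀pos))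
  have hψxheq : ψ xh = u xh + ε * Real.exp (-k * ‖xh - v'‖ ^ 2) := by
    rw [hψdef]; simp only; rw [hφdef]; ring
  -- the maximum point is interior
  have hxhint : dist xh z < r₀ := by
    rcases lt_or_eq_of_le (Metric.mem_closedBall.1 hxhD) with h | h
    · exact h
    · exfalso
      have hsph : xh ∈ Metric.sphere z r₀ := Metric.mem_sphere.2 h
      by_cases hin : ‖xh - v'‖ ≤ ρ'
      · have hC : xh ∈ Metric.sphere z r₀ ∩ Metric.closedBall v' ρ' :=
          ⟨hsph, Metric.mem_closedBall.2 (by rwa [dist_eq_norm])⟩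
        have h1 := hεC xh hC
        have h2 : Real.exp (-k * ‖xh - v'‖ ^ 2) ≤ 1 := by
          rw [Real.exp_le_one_iff]
          nlinarith [sq_nonneg ‖xh - v'‖, hkpos]
        rw [hψz] at hψxh; rw [hψxheq] at hψxh
        nlinarith [hεpos, hEz]
      · push_neg at hin
        have h2 : Real.exp (-k * ‖xh - v'‖ ^ 2) < Real.exp (-k * ρ' ^ 2) := by
          apply Real.exp_lt_exp.2
          nlinarith [hin, hρ', hkpos, mul_pos (sub_pos.2 hin) (by linarith : (0:ℝ) < ‖xh - v'‖ + ρ'),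
            mul_pos hkpos (mul_pos (sub_pos.2 hin) (by linarith : (0:ℝ) < ‖xh - v'‖ + ρ'))]
        have h4 : u xh ≤ M := humax xh hxhΩ
        rw [hψz] at hψxh; rw [hψxheq] at hψxh
        nlinarith [hεpos]
  -- local maximality on Ω
  have hloc : IsLocalMaxOn (fun y => u y - φ y) Ω xh := by
    have hball : Metric.ball xh (r₀ - dist xh z) ∈ 𝓝[Ω] xh :=
      mem_nhdsWithin_of_mem_nhds (Metric.ball_mem_nhds _ (by linarith))
    refine Filter.eventually_of_mem hball ?_
    intro w hw
    have hwD : w ∈ Metric.closedBall z r₀ := by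
      have h1 := Metric.mem_ball.1 hw
      have h2 := dist_triangle w xh z
      exact Metric.mem_closedBall.2 (by linarith)
    exact hxhmax w hwD
  -- the viscosity inequality and the contradiction
  have hvisc := hsub φ (by rw [hφdef]; exact phi_contDiff v' ε k) xh hxhΩ hloc
  rw [hφdef] at hvisc
  rw [phi_grad v' xh ε k, phi_hess v' xh ε k] at hvisc
  have hτpos : 0 < 2 * ε * k * Real.exp (-k * ‖xh - v'‖ ^ 2) := by positivity
  have hu1 : (2 * ε * k * Real.exp (-k * ‖xh - v'‖ ^ 2)) * (-(1 / (2 * k))) ≤ u xh := by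
    have e : (2 * ε * k * Real.exp (-k * ‖xh - v'‖ ^ 2)) * (-(1 / (2 * k)))
        = -(ε * Real.exp (-k * ‖xh - v'‖ ^ 2)) := by
      field_simp
    rw [e]
    rw [hψz] at hψxh; rw [hψxheq] at hψxh
    nlinarith [hεpos, hEz, hM]
  have h2 := HC2 xh hxhΩ ((2 * ε * k * Real.exp (-k * ‖xh - v'‖ ^ 2)) * (-(1 / (2 * k)))) (u xh)
    ((2 * ε * k * Real.exp (-k * ‖xh - v'‖ ^ 2)) • (xh - v'))
    ((2 * ε * k * Real.exp (-k * ‖xh - v'‖ ^ 2)) •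
      ((1 : Matrix (Fin d) (Fin d) ℝ) - (2 * k) • outer (xh - v'))) hu1
  have h3 := HC3 xh hxhΩ (2 * ε * k * Real.exp (-k * ‖xh - v'‖ ^ 2)) hτpos
    (-(1 / (2 * k))) (xh - v') ((1 : Matrix (Fin d) (Fin d) ℝ) - (2 * k) • outer (xh - v'))
  have hpos := mul_pos hτpos (hDΦ xh hxhD)
  linarith [hvisc, h2, h3, hpos]

set_option maxHeartbeats 2000000 in
/-- Abstract strong maximum principle under bounded-time controllability. -/
lemma smp_main {Ω : Set (EV d)} (hΩ : IsOpen Ω)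
    {F : EV d → ℝ → EV d → Matrix (Fin d) (Fin d) ℝ → ℝ}
    (HC1 : ContinuousOn (fun q : EV d × ℝ × EV d × Matrix (Fin d) (Fin d) ℝ =>
        F q.1 q.2.1 q.2.2.1 q.2.2.2) {q | q.1 ∈ closure Ω})
    (HC2 : ∀ x ∈ Ω, ∀ r s : ℝ, ∀ p X, r ≤ s → F x r p X ≤ F x s p X)
    (HC3 : ∀ x ∈ Ω, ∀ τ : ℝ, 0 < τ → ∀ r p X, τ * F x r p X ≤ F x (τ * r) (τ • p) (τ • X))
    {Z : Fin m → EV d → EV d}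
    (HC4 : ∀ x ∈ Ω, ∀ ζ : EV d, (∃ i, dotp (Z i x) ζ ≠ 0) → 0 < F x 0 0 (-outer ζ))
    (hZlip : ∀ i, LocLipschitzOn (Z i) (closure Ω)) (hBTC : BTC Ω Z)
    {u : EV d → ℝ} (hu : UpperSemicontinuousOn u Ω) (hsub : IsViscSubsolAll Ω F u)
    {x₀ : EV d} (hx₀ : x₀ ∈ Ω) (hmax : ∀ x ∈ Ω, u x ≤ u x₀) (hM : 0 ≤ u x₀) :
    ∀ x ∈ Ω, u x = u x₀ := by
  intro x₁ hx₁
  obtain ⟨β, y, T, hT0, ⟨hβmeas, hβbd⟩, ⟨hycont, hyeq⟩, hyΩ, hy0, hyT⟩ := hBTC x₀ hx₀ x₁ hx₁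
  have hβ1 : ∀ t i, |β t i| ≤ 1 := by
    intro t i
    have h1 := hβbd t
    have h2 : (β t i) ^ 2 ≤ 1 := le_trans (Finset.single_le_sum
      (f := fun i => (β t i) ^ 2) (fun j _ => sq_nonneg _) (Finset.mem_univ i)) h1
    nlinarith [sq_abs (β t i), abs_nonneg (β t i)]
  -- the compact tube around the trajectory
  have hYcomp : IsCompact (y '' Icc 0 T) := isCompact_Icc.image_of_continuousOn hycont
  have hYΩ : y '' Icc 0 T ⊆ Ω := by rintro _ ⟨t, ht, rfl⟩; exact hyΩ t ht
  obtain ⟨rb, hrbpos, hthick⟩ := hYcomp.exists_cthickening_subset_open hΩ hYΩ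
  set T₂ : Set (EV d) := Metric.cthickening rb (y '' Icc 0 T) with hT₂def
  have hT₂comp : IsCompact T₂ := hYcomp.cthickening
  have hT₂Ω : T₂ ⊆ Ω := hthick
  have hYT₂ : y '' Icc 0 T ⊆ T₂ := Metric.self_subset_cthickening _
  have hyT₂ : ∀ t ∈ Icc 0 T, y t ∈ T₂ := fun t ht => hYT₂ ⟨t, ht, rfl⟩
  -- the set of maximum points inside the tube
  set K : Set (EV d) := {x | x ∈ T₂ ∧ u x = u x₀} with hKdef
  have hKT₂ : K ⊆ T₂ := fun x hx => hx.1
  have hKcl : IsClosed K := by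
    apply IsSeqClosed.isClosed
    intro xs p hxs hlim
    have hpT₂ : p ∈ T₂ := Metric.isClosed_cthickening.isSeqClosed (fun n => (hxs n).1) hlim
    refine ⟨hpT₂, ?_⟩
    have hpΩ : p ∈ Ω := hT₂Ω hpT₂
    rcases lt_or_eq_of_le (hmax p hpΩ) with hlt | heq
    · exfalso
      have h1 := hu p hpΩ ((u p + u x₀) / 2) (by linarith)
      have h2 : Filter.Tendsto xs Filter.atTop (𝓝[Ω] p) :=
        tendsto_nhdsWithin_iff.2 ⟨hlim, Filter.Eventually.of_forall fun n => hT₂Ω (hxs n).1⟩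
      obtain ⟨n, hn⟩ := (h2.eventually h1).exists
      rw [(hxs n).2] at hn; linarith
    · exact heq
  have hKne : x₀ ∈ K := ⟨by rw [← hy0]; exact hyT₂ 0 ⟨le_refl 0, hT0⟩, rfl⟩
  have hKcomp : IsCompact K := hT₂comp.of_isClosed_subset hKcl hKT₂
  -- uniform bounds for the fields on the tube
  have hZcont : ∀ i, ContinuousOn (Z i) T₂ := fun i =>
    (locLip_continuousOn (hZlip i)).mono (hT₂Ω.trans subset_closure)
  have hBex : ∃ B : ℝ, 0 ≤ B ∧ ∀ i, ∀ x ∈ T₂, ‖Z i x‖ ≤ B := by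
    choose Bi hBi using fun i => hT₂comp.exists_bound_of_continuousOn (hZcont i)
    refine ⟨∑ i, max (Bi i) 0, Finset.sum_nonneg fun i _ => le_max_right _ _, ?_⟩
    intro i x hx
    calc ‖Z i x‖ ≤ Bi i := hBi i x hx
      _ ≤ max (Bi i) 0 := le_max_left _ _
      _ ≤ ∑ j, max (Bi j) 0 := Finset.single_le_sum (f := fun j => max (Bi j) 0) (fun j _ => le_max_right _ _) (Finset.mem_univ i)
  obtain ⟨B, hB0, hB⟩ := hBex
  have hLex : ∃ L : ℝ, 0 ≤ L ∧ ∀ i, ∀ x ∈ T₂, ∀ w ∈ T₂, ‖Z i x - Z i w‖ ≤ L * ‖x - w‖ := by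
    choose Li hLi0 hLi using fun i =>
      locLip_uniform (hZlip i) hT₂comp (hT₂Ω.trans subset_closure)
    refine ⟨∑ i, Li i, Finset.sum_nonneg fun i _ => hLi0 i, ?_⟩
    intro i x hx w hw
    calc ‖Z i x - Z i w‖ ≤ Li i * ‖x - w‖ := hLi i x hx w hw
      _ ≤ (∑ j, Li j) * ‖x - w‖ := by
          apply mul_le_mul_of_nonneg_right _ (norm_nonneg _)
          exact Finset.single_le_sum (fun j _ => hLi0 j) (Finset.mem_univ i)
  obtain ⟨L, hL0, hL⟩ := hLex
  -- integrability of the right-hand side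
  set f : ℝ → EV d := fun s => ∑ i, β s i • Z i (y s) with hfdef
  have hfbd : ∀ s ∈ Icc 0 T, ‖f s‖ ≤ m * B := by
    intro s hs
    calc ‖f s‖ ≤ ∑ i, ‖β s i • Z i (y s)‖ := norm_sum_le _ _
      _ ≤ ∑ _i : Fin m, 1 * B := by
          apply Finset.sum_le_sum
          intro i _
          rw [norm_smul, Real.norm_eq_abs]
          exact mul_le_mul (hβ1 s i) (hB i _ (hyT₂ s hs)) (norm_nonneg _) zero_le_one
      _ = m * B := by simp [mul_comm]
  have hfint : ∀ a b, a ∈ Icc 0 T → b ∈ Icc 0 T →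
      IntervalIntegrable f MeasureTheory.volume a b := by
    intro a b ha hb
    have hsub : Set.uIoc a b ⊆ Icc 0 T := by
      intro s hs
      rcases Set.mem_uIoc.1 hs with h | h
      · exact ⟨le_trans ha.1 (le_of_lt h.1), le_trans h.2 hb.2⟩
      · exact ⟨le_trans hb.1 (le_of_lt h.1), le_trans h.2 ha.2⟩
    rw [intervalIntegrable_iff]
    haveI : MeasureTheory.IsFiniteMeasure (MeasureTheory.volume.restrict (Set.uIoc a b)) := by
      constructor
      rw [MeasureTheory.Measure.restrict_apply_univ, Set.uIoc]
      exact measure_Ioc_lt_top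
    constructor
    · -- measurability
      have hmeas : MeasureTheory.AEStronglyMeasurable f
          (MeasureTheory.volume.restrict (Icc 0 T)) := by
        apply Finset.aestronglyMeasurable_fun_sum
        intro i _
        exact ((hβmeas i).aestronglyMeasurable).smul
          (((hZcont i).comp hycont hyT₂).aestronglyMeasurable measurableSet_Icc)
      exact hmeas.mono_measure (MeasureTheory.Measure.restrict_mono hsub le_rfl)
    · -- finiteness
      apply MeasureTheory.HasFiniteIntegral.of_bounded (C := m * B)
      apply (MeasureTheory.ae_restrict_iff' measurableSet_uIoc).2
      exact Filter.Eventually.of_forall fun s hs => hfbd s (hsub hs)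
  have hdiff : ∀ a b, a ∈ Icc 0 T → b ∈ Icc 0 T → y b - y a = ∫ s in a..b, f s := by
    intro a b ha hb
    have h3 := intervalIntegral.integral_add_adjacent_intervals
      (hfint 0 a ⟨le_refl 0, hT0⟩ ha) (hfint a b ha hb)
    rw [hyeq b hb, hyeq a ha, ← h3]
    abel
  have hseg : ∀ a b, a ∈ Icc 0 T → b ∈ Icc 0 T → a ≤ b → ‖y b - y a‖ ≤ m * B * (b - a) := by
    intro a b ha hb hab
    rw [hdiff a b ha hb]
    have h1 := intervalIntegral.norm_integral_le_of_norm_le_const (C := m * B) (f := f)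
      (a := a) (b := b) ?_
    · rwa [abs_of_nonneg (by linarith)] at h1
    · intro s hs
      rw [Set.uIoc_of_le hab] at hs
      exact hfbd s ⟨le_trans ha.1 (le_of_lt hs.1), le_trans hs.2 hb.2⟩
  -- the key one-step estimate
  have hstep : ∀ a b, a ∈ Icc 0 T → b ∈ Icc 0 T → a ≤ b → Metric.infDist (y a) K ≤ rb / 8 →
      Metric.infDist (y b) K ^ 2 ≤ Metric.infDist (y a) K ^ 2 * (1 + (2 * m * L) * (b - a))
        + (2 * m ^ 2 * L * B * rb + (m * B) ^ 2 + 1) * (b - a) ^ 2 := by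
    intro a b ha hb hab hsmall
    obtain ⟨z, hzK, hzd⟩ := hKcomp.exists_infDist_eq_dist ⟨x₀, hKne⟩ (y a)
    have hzT₂ : z ∈ T₂ := hKT₂ hzK
    have hρnn : 0 ≤ Metric.infDist (y a) K := Metric.infDist_nonneg
    have hzn : ‖y a - z‖ = Metric.infDist (y a) K := by
      rw [hzd, dist_eq_norm]
    -- orthogonality from the tangency lemma
    have horto : ∀ i, (inner ℝ (y a - z) (Z i z) : ℝ) = 0 := by
      intro i
      rcases eq_or_lt_of_le hρnn with h0 | hpos
      · have : dist (y a) z = 0 := by rw [← hzd, ← h0]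
        have hya : y a = z := by
          rwa [dist_eq_zero] at this
        rw [hya, sub_self, inner_zero_left]
      · -- apply the tangency lemma with the midpoint
        have htan := tangency (Z := Z) hΩ HC1 HC2 HC3 HC4 hu hsub hM hmax
          (v' := (1/2 : ℝ) • (y a + z)) (z := z) (ρ' := Metric.infDist (y a) K / 2)
          (by linarith) (hT₂Ω hzT₂) ?_ hzK.2 ?_
        · have h1 := htan i
          have h2 : z - (1/2 : ℝ) • (y a + z) = (1/2 : ℝ) • (z - y a) := by
            module
          rw [← real_inner_eq_dotp, h2, real_inner_smul_right] at h1
          have h3 : (inner ℝ (Z i z) (z - y a) : ℝ) = 0 := by linarith [h1]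
          rw [← neg_sub (y a) z, inner_neg_right] at h3
          have h4 : (inner ℝ (Z i z) (y a - z) : ℝ) = 0 := by linarith
          rw [real_inner_comm] at h4
          exact h4
        · -- ‖z - v'‖ = ρ/2
          have h2 : z - (1/2 : ℝ) • (y a + z) = (1/2 : ℝ) • (z - y a) := by
            module
          rw [h2, norm_smul, Real.norm_eq_abs]
          rw [show ‖z - y a‖ = Metric.infDist (y a) K from by rw [← hzn, norm_sub_rev]]
          rw [abs_of_pos (by norm_num : (0:ℝ) < 1/2)]
          ring
        · -- the touching property
          intro x hxΩ hxn hxM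
          have hv'ya : (1/2 : ℝ) • (y a + z) - y a = (1/2 : ℝ) • (z - y a) := by
            module
          have hv'n : ‖(1/2 : ℝ) • (y a + z) - y a‖ = Metric.infDist (y a) K / 2 := by
            rw [hv'ya, norm_smul, Real.norm_eq_abs,
              show ‖z - y a‖ = Metric.infDist (y a) K from by rw [← hzn, norm_sub_rev],
              abs_of_pos (by norm_num : (0:ℝ) < 1/2)]
            ring
          have hxya : ‖x - y a‖ ≤ Metric.infDist (y a) K := by
            calc ‖x - y a‖ = ‖(x - (1/2 : ℝ) • (y a + z)) + ((1/2 : ℝ) • (y a + z) - y a)‖ := by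
                  congr 1; abel
              _ ≤ ‖x - (1/2 : ℝ) • (y a + z)‖ + ‖(1/2 : ℝ) • (y a + z) - y a‖ := norm_add_le _ _
              _ ≤ Metric.infDist (y a) K / 2 + Metric.infDist (y a) K / 2 := by
                  rw [hv'n]; exact add_le_add_left hxn _
              _ = Metric.infDist (y a) K := by ring
          have hxT₂ : x ∈ T₂ := by
            rw [hT₂def]
            apply Metric.mem_cthickening_of_dist_le x (y a) rb (y '' Icc 0 T) ⟨a, ha, rfl⟩
            rw [dist_eq_norm]
            calc ‖x - y a‖ ≤ Metric.infDist (y a) K := hxya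
              _ ≤ rb / 8 := hsmall
              _ ≤ rb := by linarith
          have hxK : x ∈ K := ⟨hxT₂, hxM⟩
          have h3 : Metric.infDist (y a) K ≤ dist (y a) x := Metric.infDist_le_dist_of_mem hxK
          rw [dist_eq_norm, norm_sub_rev] at h3
          -- equality in the triangle inequality
          have h4 : ‖x - (1/2 : ℝ) • (y a + z)‖ = Metric.infDist (y a) K / 2 := by
            apply le_antisymm hxn
            by_contra hcon
            push_neg at hcon
            have := calc Metric.infDist (y a) K ≤ ‖x - y a‖ := h3
              _ ≤ ‖x - (1/2 : ℝ) • (y a + z)‖ + ‖(1/2 : ℝ) • (y a + z) - y a‖ := by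
                  calc ‖x - y a‖ = ‖(x - (1/2 : ℝ) • (y a + z)) + ((1/2 : ℝ) • (y a + z) - y a)‖ := by
                        congr 1; abel
                    _ ≤ _ := norm_add_le _ _
            rw [hv'n] at this
            linarith
          have h5 : ‖(x - (1/2 : ℝ) • (y a + z)) + ((1/2 : ℝ) • (y a + z) - y a)‖
              = ‖x - (1/2 : ℝ) • (y a + z)‖ + ‖(1/2 : ℝ) • (y a + z) - y a‖ := by
            have he : (x - (1/2 : ℝ) • (y a + z)) + ((1/2 : ℝ) • (y a + z) - y a) = x - y a := by
              abel
            rw [he, h4, hv'n]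
            apply le_antisymm
            · calc ‖x - y a‖ ≤ Metric.infDist (y a) K := hxya
                _ = _ := by ring
            · calc Metric.infDist (y a) K / 2 + Metric.infDist (y a) K / 2
                  = Metric.infDist (y a) K := by ring
                _ ≤ ‖x - y a‖ := h3
          have h6 := eq_of_norm_eq_of_norm_add_eq (by rw [h4, hv'n]) h5
          -- x - v' = v' - y a  ⇒  x = z
          have h8 : x = ((1/2 : ℝ) • (y a + z) - y a) + (1/2 : ℝ) • (y a + z) := by
            rw [← h6]; abel
          rw [h8]
          module
    -- the quantitative estimate
    have hinner : (inner ℝ (y a - z) (y b - y a) : ℝ)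
        ≤ (m * (L * (Metric.infDist (y a) K * (Metric.infDist (y a) K + m * B * (b - a)))))
            * (b - a) := by
      have hcc := (innerSL ℝ (y a - z)).intervalIntegral_comp_comm (hfint a b ha hb)
      have hstart : (inner ℝ (y a - z) (y b - y a) : ℝ)
          = ∫ s in a..b, (innerSL ℝ (y a - z)) (f s) := by
        rw [hdiff a b ha hb]
        exact hcc.symm
      rw [hstart]
      have hptwise : ∀ s ∈ Set.uIoc a b, ‖(innerSL ℝ (y a - z)) (f s)‖
          ≤ m * (L * (Metric.infDist (y a) K * (Metric.infDist (y a) K + m * B * (b - a)))) := by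
        intro s hs
        rw [Set.uIoc_of_le hab] at hs
        have hsIcc : s ∈ Icc 0 T := ⟨le_trans ha.1 (le_of_lt hs.1), le_trans hs.2 hb.2⟩
        have hys : ‖y s - y a‖ ≤ m * B * (s - a) := hseg a s ha hsIcc (le_of_lt hs.1)
        rw [innerSL_apply_apply, hfdef]
        simp only [inner_sum, real_inner_smul_right]
        calc |∑ i, β s i * (inner ℝ (y a - z) (Z i (y s)) : ℝ)|
            ≤ ∑ i, |β s i * (inner ℝ (y a - z) (Z i (y s)) : ℝ)| := Finset.abs_sum_le_sum_abs _ _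
          _ ≤ ∑ _i : Fin m, 1 * (L * (Metric.infDist (y a) K
                * (Metric.infDist (y a) K + m * B * (b - a)))) := by
              apply Finset.sum_le_sum
              intro i _
              rw [abs_mul]
              apply mul_le_mul (hβ1 s i) ?_ (abs_nonneg _) zero_le_one
              -- |⟨y a - z, Z i (y s)⟩| bound
              have he : (inner ℝ (y a - z) (Z i (y s)) : ℝ)
                  = (inner ℝ (y a - z) (Z i (y s) - Z i z) : ℝ) := by
                rw [inner_sub_right, horto i]; ring
              rw [he]
              calc |(inner ℝ (y a - z) (Z i (y s) - Z i z) : ℝ)|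
                  ≤ ‖y a - z‖ * ‖Z i (y s) - Z i z‖ := abs_real_inner_le_norm _ _
                _ ≤ Metric.infDist (y a) K * (L * ‖y s - z‖) := by
                    rw [hzn]
                    apply mul_le_mul_of_nonneg_left
                      (hL i _ (hyT₂ s hsIcc) z hzT₂) hρnn
                _ ≤ Metric.infDist (y a) K
                      * (L * (Metric.infDist (y a) K + m * B * (b - a))) := by
                    apply mul_le_mul_of_nonneg_left _ hρnn
                    apply mul_le_mul_of_nonneg_left _ hL0
                    calc ‖y s - z‖ = ‖(y s - y a) + (y a - z)‖ := by congr 1; abel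
                      _ ≤ ‖y s - y a‖ + ‖y a - z‖ := norm_add_le _ _
                      _ ≤ m * B * (s - a) + Metric.infDist (y a) K := by
                          rw [hzn]; exact add_le_add_left hys _
                      _ ≤ Metric.infDist (y a) K + m * B * (b - a) := by
                          have : m * B * (s - a) ≤ m * B * (b - a) := by
                            apply mul_le_mul_of_nonneg_left (by linarith [hs.2])
                              (by positivity)
                          linarith
                _ = L * (Metric.infDist (y a) K
                      * (Metric.infDist (y a) K + m * B * (b - a))) := by ring
          _ = m * (L * (Metric.infDist (y a) K
                * (Metric.infDist (y a) K + m * B * (b - a)))) := by simp [mul_comm]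
      have h1 := intervalIntegral.norm_integral_le_of_norm_le_const hptwise
      rw [abs_of_nonneg (by linarith)] at h1
      calc (∫ s in a..b, (innerSL ℝ (y a - z)) (f s))
          ≤ |∫ s in a..b, (innerSL ℝ (y a - z)) (f s)| := le_abs_self _
        _ = ‖∫ s in a..b, (innerSL ℝ (y a - z)) (f s)‖ := (Real.norm_eq_abs _).symm
        _ ≤ _ := h1
    have hnb : ‖y b - y a‖ ≤ m * B * (b - a) := hseg a b ha hb hab
    have hexpand : ‖y b - z‖ ^ 2
        = ‖y a - z‖ ^ 2 + 2 * (inner ℝ (y a - z) (y b - y a) : ℝ) + ‖y b - y a‖ ^ 2 := by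
      rw [show y b - z = (y a - z) + (y b - y a) from by abel]
      exact norm_add_sq_real _ _
    have hble : Metric.infDist (y b) K ≤ ‖y b - z‖ := by
      rw [← dist_eq_norm]; exact Metric.infDist_le_dist_of_mem hzK
    have hsq : Metric.infDist (y b) K ^ 2 ≤ ‖y b - z‖ ^ 2 := by
      apply pow_le_pow_left₀ Metric.infDist_nonneg hble
    have hnb2 : ‖y b - y a‖ ^ 2 ≤ (m * B * (b - a)) ^ 2 := by
      apply pow_le_pow_left₀ (norm_nonneg _) hnb
    rw [hexpand, hzn] at hsq
    have hρrb : Metric.infDist (y a) K ≤ rb := by linarith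
    have haux : (2 * (m:ℝ) * L * ((m:ℝ) * B) * (b - a) ^ 2) * Metric.infDist (y a) K
        ≤ (2 * (m:ℝ) * L * ((m:ℝ) * B) * (b - a) ^ 2) * rb :=
      mul_le_mul_of_nonneg_left hρrb (by positivity)
    nlinarith [hsq, hinner, hnb2, haux, sq_nonneg (b - a)]
  -- iterate the one-step estimate
  have hzero : ∀ t ∈ Icc 0 T, (∀ s ∈ Icc 0 t, Metric.infDist (y s) K ≤ rb / 8) →
      Metric.infDist (y t) K = 0 := by
    intro t ht hsm
    set C₁ : ℝ := 2 * m * L with hC₁def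
    set C₂ : ℝ := 2 * m ^ 2 * L * B * rb + (m * B) ^ 2 + 1 with hC₂def
    have hC₁0 : 0 ≤ C₁ := by positivity
    have hC₂0 : 0 ≤ C₂ := by positivity
    have ht0 : 0 ≤ t := ht.1
    have hkey : ∀ n : ℕ, 0 < n →
        Metric.infDist (y t) K ^ 2 ≤ C₂ * (t / n) * t * Real.exp (C₁ * t) := by
      intro n hn
      have hn0 : (0:ℝ) < n := by exact_mod_cast hn
      set h : ℝ := t / n with hhdef
      have hh0 : 0 ≤ h := div_nonneg ht0 (le_of_lt hn0)
      have hmem : ∀ j : ℕ, j ≤ n → (j : ℝ) * h ∈ Icc 0 t := by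
        intro j hj
        constructor
        · positivity
        · have h1 : (j:ℝ) ≤ n := by exact_mod_cast hj
          rw [hhdef, div_eq_mul_inv]
          have h2 : (j:ℝ) * (t * (n:ℝ)⁻¹) ≤ (n:ℝ) * (t * (n:ℝ)⁻¹) :=
            mul_le_mul_of_nonneg_right h1 (by positivity)
          have h3 : (n:ℝ) * (t * (n:ℝ)⁻¹) = t := by field_simp
          linarith
      have hstepj : ∀ j < n, Metric.infDist (y ((j + 1 : ℕ) * h)) K ^ 2
          ≤ Metric.infDist (y ((j : ℕ) * h)) K ^ 2 * (1 + C₁ * h) + C₂ * h ^ 2 := by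
        intro j hj
        have hja := hmem j (le_of_lt hj)
        have hjb := hmem (j + 1) hj
        have hjaT : (j:ℝ) * h ∈ Icc 0 T := ⟨hja.1, le_trans hja.2 ht.2⟩
        have hjbT : ((j:ℕ) + 1 : ℝ) * h ∈ Icc 0 T := by
          constructor
          · positivity
          · push_cast at hjb ⊢
            exact le_trans hjb.2 ht.2
        have hab' : (j:ℝ) * h ≤ ((j:ℝ) + 1) * h := by nlinarith
        have hsm' := hsm ((j:ℝ) * h) hja
        have := hstep ((j:ℝ) * h) (((j:ℝ) + 1) * h) hjaT hjbT hab' hsm'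
        have he : ((j:ℝ) + 1) * h - (j:ℝ) * h = h := by ring
        rw [he] at this
        push_cast
        exact this
      have hiter := iter_bound (fun j => Metric.infDist (y ((j : ℕ) * h)) K ^ 2) C₁ C₂ h
        (by simp only [Nat.cast_zero, zero_mul]
            rw [hy0, Metric.infDist_zero_of_mem hKne]
            norm_num)
        hC₁0 hC₂0 hh0 n hstepj
      have hnh : (n : ℝ) * h = t := by
        rw [hhdef]; field_simp
      have hpow : (1 + C₁ * h) ^ n ≤ Real.exp (C₁ * t) := by
        have h1 : (1 + C₁ * h) ^ n ≤ Real.exp (C₁ * h) ^ n := by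
          apply pow_le_pow_left₀ (by positivity)
          linarith [Real.add_one_le_exp (C₁ * h)]
        have h2 : Real.exp (C₁ * h) ^ n = Real.exp ((n : ℝ) * (C₁ * h)) :=
          (Real.exp_nat_mul _ n).symm
        have h3 : (n:ℝ) * (C₁ * h) = C₁ * t := by
          rw [show (n:ℝ) * (C₁ * h) = C₁ * ((n:ℝ) * h) from by ring, hnh]
        rw [h2, h3] at h1; exact h1
      replace hiter : Metric.infDist (y ((n:ℝ) * h)) K ^ 2
          ≤ C₂ * h ^ 2 * n * (1 + C₁ * h) ^ n := hiter
      rw [hnh] at hiter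
      have he : C₂ * h ^ 2 * (n:ℝ) = C₂ * h * t := by rw [← hnh]; ring
      calc Metric.infDist (y t) K ^ 2 ≤ C₂ * h ^ 2 * n * (1 + C₁ * h) ^ n := hiter
        _ ≤ C₂ * h ^ 2 * n * Real.exp (C₁ * t) := mul_le_mul_of_nonneg_left hpow (by positivity)
        _ = C₂ * h * t * Real.exp (C₁ * t) := by rw [he]
    have hle0 : Metric.infDist (y t) K ^ 2 ≤ 0 := by
      apply le_of_forall_pos_le_add
      intro ε hε
      obtain ⟨n, hn⟩ := exists_nat_gt (max 1 (C₂ * t * t * Real.exp (C₁ * t) / ε))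
      have hn1 : 0 < n := by
        have := lt_of_le_of_lt (le_max_left 1 _) hn
        exact_mod_cast lt_of_lt_of_le (by norm_num : (0:ℝ) < 1) (le_of_lt this)
      have hn0 : (0:ℝ) < n := by exact_mod_cast hn1
      have h2 := hkey n hn1
      have h3 : C₂ * t * t * Real.exp (C₁ * t) / ε < n :=
        lt_of_le_of_lt (le_max_right 1 _) hn
      have h4 : C₂ * (t / n) * t * Real.exp (C₁ * t) ≤ ε := by
        rw [div_eq_mul_inv]
        have h5 : C₂ * t * t * Real.exp (C₁ * t) < n * ε := by
          rw [div_lt_iff₀ hε] at h3; linarith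
        have h6 : C₂ * (t * (n:ℝ)⁻¹) * t * Real.exp (C₁ * t)
            = (C₂ * t * t * Real.exp (C₁ * t)) * (n:ℝ)⁻¹ := by ring
        rw [h6]
        calc (C₂ * t * t * Real.exp (C₁ * t)) * (n:ℝ)⁻¹
            ≤ (n * ε) * (n:ℝ)⁻¹ := by
              apply mul_le_mul_of_nonneg_right (le_of_lt h5) (by positivity)
          _ = ε := by field_simp
      linarith
    have := sq_nonneg (Metric.infDist (y t) K)
    have h7 : Metric.infDist (y t) K ^ 2 = 0 := le_antisymm hle0 (sq_nonneg _)
    exact pow_eq_zero_iff (n := 2) (by norm_num) |>.1 h7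
  -- propagate along the whole trajectory by a continuity argument
  have hdcont : ContinuousOn (fun t => Metric.infDist (y t) K) (Icc 0 T) :=
    (Metric.continuous_infDist_pt K).comp_continuousOn hycont
  set A : Set ℝ := {t | t ∈ Icc 0 T ∧ ∀ s ∈ Icc 0 t, Metric.infDist (y s) K ≤ rb / 8} with hAdef
  have hA0 : (0:ℝ) ∈ A := by
    refine ⟨⟨le_refl 0, hT0⟩, ?_⟩
    intro s hs
    have hs0 : s = 0 := le_antisymm hs.2 hs.1
    rw [hs0, hy0, Metric.infDist_zero_of_mem hKne]
    positivity
  have hAne : A.Nonempty := ⟨0, hA0⟩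
  have hAbdd : BddAbove A := ⟨T, fun t ht => ht.1.2⟩
  have htsIcc : sSup A ∈ Icc 0 T := ⟨le_csSup hAbdd hA0, csSup_le hAne fun t ht => ht.1.2⟩
  have hd_lt : ∀ s, s ∈ Icc 0 T → s < sSup A → Metric.infDist (y s) K = 0 := by
    intro s hs hst
    obtain ⟨a, haA, hsa⟩ := exists_lt_of_lt_csSup hAne hst
    exact hzero s ⟨hs.1, le_trans (le_of_lt hsa) haA.1.2⟩
      fun σ hσ => haA.2 σ ⟨hσ.1, le_trans hσ.2 (le_of_lt hsa)⟩
  have hdts : Metric.infDist (y (sSup A)) K = 0 := by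
    rcases eq_or_lt_of_le htsIcc.1 with h0 | h0
    · rw [← h0, hy0, Metric.infDist_zero_of_mem hKne]
    · by_contra hne
      have hpos : 0 < Metric.infDist (y (sSup A)) K :=
        lt_of_le_of_ne Metric.infDist_nonneg (Ne.symm hne)
      have hc := hdcont (sSup A) htsIcc
      rw [Metric.continuousWithinAt_iff] at hc
      obtain ⟨δ, hδpos, hδ⟩ := hc _ hpos
      set s : ℝ := max 0 (sSup A - δ / 2) with hsdef
      have hslt : s < sSup A := max_lt h0 (by linarith)
      have hsIcc : s ∈ Icc 0 T := ⟨le_max_left _ _, le_trans (le_of_lt hslt) htsIcc.2⟩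
      have hdist : dist s (sSup A) < δ := by
        rw [Real.dist_eq, abs_of_nonpos (by linarith), neg_sub]
        have : sSup A - δ / 2 ≤ s := le_max_right _ _
        linarith
      have h2 := hδ hsIcc hdist
      rw [hd_lt s hsIcc hslt, Real.dist_eq, zero_sub, abs_neg,
        abs_of_nonneg (le_of_lt hpos)] at h2
      linarith
  have htT : sSup A = T := by
    by_contra hneT
    have hlt : sSup A < T := lt_of_le_of_ne htsIcc.2 hneT
    have hc := hdcont (sSup A) htsIcc
    rw [Metric.continuousWithinAt_iff] at hc
    obtain ⟨δ, hδpos, hδ⟩ := hc (rb / 8) (by positivity)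
    have ht'A : min (sSup A + δ / 2) T ∈ A := by
      refine ⟨⟨le_min (by linarith [htsIcc.1]) hT0, min_le_right _ _⟩, ?_⟩
      intro s hs
      rcases le_or_gt s (sSup A) with h | h
      · rcases lt_or_eq_of_le h with h' | h'
        · rw [hd_lt s ⟨hs.1, le_trans h htsIcc.2⟩ h']; positivity
        · rw [h', hdts]; positivity
      · have hsT : s ∈ Icc 0 T := ⟨hs.1, le_trans hs.2 (min_le_right _ _)⟩
        have hdists : dist s (sSup A) < δ := by
          rw [Real.dist_eq, abs_of_nonneg (by linarith)]
          have : s ≤ sSup A + δ / 2 := le_trans hs.2 (min_le_left _ _)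
          linarith
        have h2 := hδ hsT hdists
        rw [hdts, Real.dist_eq, sub_zero,
          abs_of_nonneg Metric.infDist_nonneg] at h2
        linarith
    have h1 : min (sSup A + δ / 2) T ≤ sSup A := le_csSup hAbdd ht'A
    have h2 : sSup A < min (sSup A + δ / 2) T := lt_min (by linarith) hlt
    linarith
  have hdT : Metric.infDist (y T) K = 0 := by rw [← htT]; exact hdts
  have hyTK : y T ∈ K := (hKcl.mem_iff_infDist_zero ⟨x₀, hKne⟩).2 hdT
  rw [hyT] at hyTK
  exact hyTK.2

lemma bddBelow_range_mul {ι : Type*} {g : ι → ℝ} {τ : ℝ} (hτ : 0 ≤ τ)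
    (h : BddBelow (Set.range g)) : BddBelow (Set.range fun i => τ * g i) := by
  obtain ⟨c0, hc0⟩ := h
  refine ⟨τ * c0, ?_⟩
  rintro v ⟨i, rfl⟩
  exact mul_le_mul_of_nonneg_left (hc0 ⟨i, rfl⟩) hτ

end Aux
/-- Corollary 3.10: Strong Maximum Principle for the Hamilton–Jacobi–Isaacs
operators under bounded time controllability of the fields `Zᵢ`. -/
theorem smp_isaacs {d m : ℕ} (Ω : Set (EV d))
    (hΩ : IsOpen Ω) (hconn : IsConnected Ω) {I J : Type*} [Nonempty I] [Nonempty J]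
    (A : I → J → EV d → Matrix (Fin d) (Fin d) ℝ) (b : I → J → EV d → EV d)
    (c : I → J → EV d → ℝ)
    (hpsd : ∀ α β x, (A α β x).PosSemidef) (hc : ∀ α β x, 0 ≤ c α β x)
    (hfin1 : ∀ (β : J) (x : EV d) (r : ℝ) (p : EV d) (X : Matrix (Fin d) (Fin d) ℝ),
      BddBelow (Set.range fun α => linOp2 A b c α β x r p X))
    (hfin2 : ∀ (x : EV d) (r : ℝ) (p : EV d) (X : Matrix (Fin d) (Fin d) ℝ),
      BddAbove (Set.range fun β => ⨅ α, linOp2 A b c α β x r p X))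
    (hfin3 : ∀ (α : I) (x : EV d) (r : ℝ) (p : EV d) (X : Matrix (Fin d) (Fin d) ℝ),
      BddAbove (Set.range fun β => linOp2 A b c α β x r p X))
    (hfin4 : ∀ (x : EV d) (r : ℝ) (p : EV d) (X : Matrix (Fin d) (Fin d) ℝ),
      BddBelow (Set.range fun α => ⨆ β, linOp2 A b c α β x r p X))
    (hcont1 : ContinuousOn
      (fun q : EV d × ℝ × EV d × Matrix (Fin d) (Fin d) ℝ =>
        isaacsLower A b c q.1 q.2.1 q.2.2.1 q.2.2.2) {q | q.1 ∈ closure Ω})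
    (hcont2 : ContinuousOn
      (fun q : EV d × ℝ × EV d × Matrix (Fin d) (Fin d) ℝ =>
        isaacsUpper A b c q.1 q.2.1 q.2.2.1 q.2.2.2) {q | q.1 ∈ closure Ω})
    (Z : Fin m → EV d → EV d) (hZlip : ∀ i, LocLipschitzOn (Z i) (closure Ω))
    (hBTC : BTC Ω Z) :
    ((∃ β₀ : J, ∀ α : I, ∀ i, ∀ x ∈ closure Ω, matGEouter (A α β₀ x) (Z i x)) →
      ∀ u : EV d → ℝ, UpperSemicontinuousOn u Ω →
        IsViscSubsolAll Ω (isaacsLower A b c) u →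
        ∀ x₀ ∈ Ω, (∀ x ∈ Ω, u x ≤ u x₀) → 0 ≤ u x₀ → ∀ x ∈ Ω, u x = u x₀) ∧
    ((∀ α : I, ∃ β : J, ∀ i, ∀ x ∈ closure Ω, matGEouter (A α β x) (Z i x)) →
      ∀ u : EV d → ℝ, UpperSemicontinuousOn u Ω →
        IsViscSubsolAll Ω (isaacsUpper A b c) u →
        ∀ x₀ ∈ Ω, (∀ x ∈ Ω, u x ≤ u x₀) → 0 ≤ u x₀ → ∀ x ∈ Ω, u x = u x₀) := by
  -- basic algebraic facts about the linear operators
  have hlin_smul : ∀ (α : I) (β' : J) (x : EV d) (τ r : ℝ) (p : EV d)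
      (X : Matrix (Fin d) (Fin d) ℝ),
      linOp2 A b c α β' x (τ * r) (τ • p) (τ • X) = τ * linOp2 A b c α β' x r p X := by
    intro α β' x τ r p X
    unfold linOp2
    rw [Matrix.mul_smul, Matrix.trace_smul]
    have hdotp : dotp (b α β' x) (τ • p) = τ * dotp (b α β' x) p := by
      unfold dotp
      rw [Finset.mul_sum]
      apply Finset.sum_congr rfl
      intro i _
      rw [PiLp.smul_apply, smul_eq_mul]; ring
    rw [hdotp]
    simp only [smul_eq_mul]
    ring
  have hlin_mono : ∀ (α : I) (β' : J) (x : EV d) (r s : ℝ) (p : EV d)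
      (X : Matrix (Fin d) (Fin d) ℝ), r ≤ s →
      linOp2 A b c α β' x r p X ≤ linOp2 A b c α β' x s p X := by
    intro α β' x r s p X hrs
    unfold linOp2
    have := mul_le_mul_of_nonneg_left hrs (hc α β' x)
    linarith
  have hlin00 : ∀ (α : I) (β' : J) (x : EV d) (ζ : EV d),
      linOp2 A b c α β' x 0 0 (-outer ζ) = ∑ i, ∑ j, A α β' x i j * ζ i * ζ j := by
    intro α β' x ζ
    unfold linOp2
    rw [Matrix.mul_neg, Matrix.trace_neg, neg_neg]
    have h1 : dotp (b α β' x) 0 = 0 := by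
      unfold dotp; simp
    rw [h1]
    simp only [mul_zero, sub_zero, add_zero]
    rw [Matrix.trace]
    simp only [Matrix.diag_apply, Matrix.mul_apply, outer, Matrix.of_apply]
    apply Finset.sum_congr rfl
    intro i _
    apply Finset.sum_congr rfl
    intro j _
    ring
  constructor
  · -- part (i) : the lower Isaacs operator
    rintro ⟨β₀, hβ₀⟩ u hu hsub x₀ hx₀ hmax hM0
    refine smp_main hΩ hcont1 ?_ ?_ (Z := Z) ?_ hZlip hBTC hu hsub hx₀ hmax hM0
    · -- HC2 : monotone in r
      intro x hx r s p X hrs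
      show (⨆ β', ⨅ α, linOp2 A b c α β' x r p X) ≤ ⨆ β', ⨅ α, linOp2 A b c α β' x s p X
      apply ciSup_mono (hfin2 x s p X)
      intro β'
      exact ciInf_mono (hfin1 β' x r p X) fun α => hlin_mono α β' x r s p X hrs
    · -- HC3 : positive homogeneity (one inequality)
      intro x hx τ hτ r p X
      show τ * (⨆ β', ⨅ α, linOp2 A b c α β' x r p X)
          ≤ ⨆ β', ⨅ α, linOp2 A b c α β' x (τ * r) (τ • p) (τ • X)
      rw [Real.mul_iSup_of_nonneg (le_of_lt hτ)]
      apply ciSup_mono (hfin2 x (τ * r) (τ • p) (τ • X))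
      intro β'
      rw [Real.mul_iInf_of_nonneg (le_of_lt hτ)]
      exact ciInf_mono (bddBelow_range_mul (le_of_lt hτ) (hfin1 β' x r p X))
        fun α => le_of_eq (hlin_smul α β' x τ r p X).symm
    · -- HC4 : subunit positivity
      rintro x hx ζ ⟨i, hi⟩
      have hkey : ∀ α, (dotp (Z i x) ζ) ^ 2 ≤ linOp2 A b c α β₀ x 0 0 (-outer ζ) := by
        intro α
        rw [hlin00]
        exact hβ₀ α i x (subset_closure hx) ζ
      have h1 : (dotp (Z i x) ζ) ^ 2 ≤ ⨅ α, linOp2 A b c α β₀ x 0 0 (-outer ζ) := le_ciInf hkey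
      have h2 : (⨅ α, linOp2 A b c α β₀ x 0 0 (-outer ζ))
          ≤ ⨆ β', ⨅ α, linOp2 A b c α β' x 0 0 (-outer ζ) :=
        le_ciSup (hfin2 x 0 0 (-outer ζ)) β₀
      have h3 : 0 < (dotp (Z i x) ζ) ^ 2 := pow_two_pos_of_ne_zero hi
      show 0 < (⨆ β', ⨅ α, linOp2 A b c α β' x 0 0 (-outer ζ))
      linarith
  · -- part (ii) : the upper Isaacs operator
    intro hβ u hu hsub x₀ hx₀ hmax hM0
    choose βf hβf using hβ
    refine smp_main hΩ hcont2 ?_ ?_ (Z := Z) ?_ hZlip hBTC hu hsub hx₀ hmax hM0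
    · intro x hx r s p X hrs
      show (⨅ α, ⨆ β', linOp2 A b c α β' x r p X) ≤ ⨅ α, ⨆ β', linOp2 A b c α β' x s p X
      apply ciInf_mono (hfin4 x r p X)
      intro α
      exact ciSup_mono (hfin3 α x s p X) fun β' => hlin_mono α β' x r s p X hrs
    · intro x hx τ hτ r p X
      show τ * (⨅ α, ⨆ β', linOp2 A b c α β' x r p X)
          ≤ ⨅ α, ⨆ β', linOp2 A b c α β' x (τ * r) (τ • p) (τ • X)
      rw [Real.mul_iInf_of_nonneg (le_of_lt hτ)]
      apply ciInf_mono (bddBelow_range_mul (le_of_lt hτ) (hfin4 x r p X))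
      intro α
      rw [Real.mul_iSup_of_nonneg (le_of_lt hτ)]
      apply ciSup_mono (hfin3 α x (τ * r) (τ • p) (τ • X))
      intro β'
      exact le_of_eq (hlin_smul α β' x τ r p X).symm
    · rintro x hx ζ ⟨i, hi⟩
      have h3 : 0 < (dotp (Z i x) ζ) ^ 2 := pow_two_pos_of_ne_zero hi
      show 0 < (⨅ α, ⨆ β', linOp2 A b c α β' x 0 0 (-outer ζ))
      have hkey : ∀ α, (dotp (Z i x) ζ) ^ 2 ≤ ⨆ β', linOp2 A b c α β' x 0 0 (-outer ζ) := by
        intro α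
        have h1 : (dotp (Z i x) ζ) ^ 2 ≤ linOp2 A b c α (βf α) x 0 0 (-outer ζ) := by
          rw [hlin00]
          exact hβf α i x (subset_closure hx) ζ
        exact le_trans h1 (le_ciSup (hfin3 α x 0 0 (-outer ζ)) (βf α))
      have h1 := le_ciInf hkey
      linarith
end
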